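/- For all integers n ≥ 1 and δ ≥ 2, every sequential schedule of the tree T(n, δ) has peak memory at least n + δ. -/

import Mathlib

/-- A finite rooted in-tree: every node has a parent (the root is its own
parent), and a rank function witnesses that following parents strictly
decreases towards the root, so every node has a unique path to the root. -/
structure InTree where
  V : Type
  [fin : Fintype V]
  [deq : DecidableEq V]
  root : V
  parent : V → V
  parent_root : parent root = root
  rk : V → ℕ
  rk_lt : ∀ v, v ≠ root → rk (parent v) < rk v
  rk_root : ∀ v, rk v = 0 → v = root

attribute [instance] InTree.fin InTree.deq

/-- A schedule of `T` on `p` processors: at most `p` tasks per unit time step,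
and every non-root task finishes before its parent starts. -/
def InTree.IsSchedule (T : InTree) (p : ℕ) (t : T.V → ℕ) : Prop :=
  (∀ s : ℕ, (Finset.univ.filter (fun i => t i = s)).card ≤ p) ∧
  (∀ i : T.V, i ≠ T.root → t i + 1 ≤ t (T.parent i))

/-- Makespan of a schedule: `max_i (t i + 1)`. -/
def InTree.makespan (T : InTree) (t : T.V → ℕ) : ℕ :=
  Finset.univ.sup (fun i => t i + 1)

/-- Memory used at step `s`: number of nodes `i` with `t i ≤ s` that are the
root or whose parent has not finished before step `s`. -/
def InTree.memAt (T : InTree) (t : T.V → ℕ) (s : ℕ) : ℕ :=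
  (Finset.univ.filter (fun i : T.V => t i ≤ s ∧ (i = T.root ∨ s ≤ t (T.parent i)))).card

/-- Peak memory of a schedule: maximum memory usage over steps `0 ≤ s < makespan`. -/
def InTree.peakMemory (T : InTree) (t : T.V → ℕ) : ℕ :=
  (Finset.range (T.makespan t)).sup (T.memAt t)


/-- Node set of the tree `T(n, δ)` used in the inapproximability proof:
a root; for each `i < n` a chain `cp^i_1, …, cp^i_{δ-1}` (index `j : Fin (δ-1)`
represents `cp^i_{j+1}`); for each `cp^i_j` a child `d^i_j`; for each `d^i_j`
its `δ - (j+1) + 1 = δ - j` leaf children; and two extra nodes `b^i_δ`,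
`b^i_{δ+1}` below `cp^i_{δ-1}`. -/
abbrev TV (n δ : ℕ) : Type :=
  Unit ⊕ (Fin n × Fin (δ-1)) ⊕ (Fin n × Fin (δ-1)) ⊕
    (Σ q : Fin n × Fin (δ-1), Fin (δ - q.2.val)) ⊕ (Fin n) ⊕ (Fin n)

/-- The tree `T(n, δ)` of the inapproximability proof. -/
def theTree (n δ : ℕ) (hδ : 2 ≤ δ) : InTree where
  V := TV n δ
  root := Sum.inl ()
  parent := fun v => match v with
    | Sum.inl _ => Sum.inl ()
    | Sum.inr (Sum.inl (i, j)) =>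
        if h : j.val = 0 then Sum.inl ()
        else Sum.inr (Sum.inl (i, ⟨j.val - 1, by have := j.isLt; omega⟩))
    | Sum.inr (Sum.inr (Sum.inl (i, j))) => Sum.inr (Sum.inl (i, j))
    | Sum.inr (Sum.inr (Sum.inr (Sum.inl ⟨q, _⟩))) => Sum.inr (Sum.inr (Sum.inl q))
    | Sum.inr (Sum.inr (Sum.inr (Sum.inr (Sum.inl i)))) =>
        Sum.inr (Sum.inl (i, ⟨δ - 2, by omega⟩))
    | Sum.inr (Sum.inr (Sum.inr (Sum.inr (Sum.inr i)))) =>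
        Sum.inr (Sum.inr (Sum.inr (Sum.inr (Sum.inl i))))
  parent_root := rfl
  rk := fun v => match v with
    | Sum.inl _ => 0
    | Sum.inr (Sum.inl (_, j)) => j.val + 1
    | Sum.inr (Sum.inr (Sum.inl (_, j))) => j.val + 2
    | Sum.inr (Sum.inr (Sum.inr (Sum.inl ⟨q, _⟩))) => q.2.val + 3
    | Sum.inr (Sum.inr (Sum.inr (Sum.inr (Sum.inl _)))) => δ
    | Sum.inr (Sum.inr (Sum.inr (Sum.inr (Sum.inr _)))) => δ + 1
  rk_lt := by
    rintro (u | ⟨i, j⟩ | ⟨i, j⟩ | ⟨q, k⟩ | i | i) h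
    · cases u; exact absurd rfl h
    · by_cases h0 : j.val = 0 <;> simp [h0] <;> omega
    · simp
    · simp
    · simp; omega
    · simp
  rk_root := by
    rintro (u | ⟨i, j⟩ | ⟨i, j⟩ | ⟨q, k⟩ | i | i) h
    · cases u; rfl
    · simp at h
    · simp at h
    · simp at h
    · simp at h; omega
    · simp at h

/-- The node `cp^i_{j+1}` of `T(n, δ)`. -/
def cpNode (n δ : ℕ) (hδ : 2 ≤ δ) (i : Fin n) (j : Fin (δ-1)) : (theTree n δ hδ).V :=
  Sum.inr (Sum.inl (i, j))
/-- Every sequential schedule (one processor) of `T(n, δ)` has peak memory at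
least `n + δ`. -/
theorem stmt6 (n δ : ℕ) (hn : 1 ≤ n) (hδ : 2 ≤ δ)
    (t : (theTree n δ hδ).V → ℕ) (ht : (theTree n δ hδ).IsSchedule 1 t) :
    n + δ ≤ (theTree n δ hδ).peakMemory t := by
  obtain ⟨-, hprec⟩ := ht
  have hδ1 : 0 < δ - 1 := by omega
  set j0 : Fin (δ - 1) := ⟨0, hδ1⟩ with hj0
  set D : Fin n → TV n δ :=
    fun i => Sum.inr (Sum.inr (Sum.inl (i, j0))) with hD
  set C : Fin n → TV n δ := fun i => Sum.inr (Sum.inl (i, j0)) with hC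
  have hparD : ∀ i, (theTree n δ hδ).parent (D i) = C i := fun i => rfl
  have hparC : ∀ i, (theTree n δ hδ).parent (C i) = Sum.inl () := fun i => rfl
  have hDne : ∀ i, D i ≠ (theTree n δ hδ).root := by intro i h; simp [hD, theTree] at h
  have hCne : ∀ i, C i ≠ (theTree n δ hδ).root := by intro i h; simp [hC, theTree] at h
  have hn' : (Finset.univ : Finset (Fin n)).Nonempty := ⟨⟨0, hn⟩, Finset.mem_univ _⟩
  obtain ⟨i0, -, hmax⟩ := Finset.exists_max_image Finset.univ (fun i => t (D i)) hn'
  set s : ℕ := t (D i0) with hs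
  have hDC : ∀ i, t (D i) + 1 ≤ t (C i) := by
    intro i; have := hprec (D i) (hDne i); rwa [hparD] at this
  have hCroot : ∀ i, t (C i) + 1 ≤ t (Sum.inl ()) := by
    intro i; have := hprec (C i) (hCne i); rwa [hparC] at this
  have hroot : s + 1 ≤ t (Sum.inl ()) := le_trans (by have := hDC i0; omega) (hCroot i0)
  set L : Fin δ → TV n δ :=
    fun k => Sum.inr (Sum.inr (Sum.inr (Sum.inl ⟨(i0, j0), k⟩))) with hL
  have hparL : ∀ k, (theTree n δ hδ).parent (L k) = D i0 := fun k => rfl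
  have hLne : ∀ k, L k ≠ (theTree n δ hδ).root := by intro k h; simp [hL, theTree] at h
  have hLD : ∀ k, t (L k) + 1 ≤ s := by
    intro k; have := hprec (L k) (hLne k); rwa [hparL] at this
  set w : Fin n → TV n δ := fun i => if s ≤ t (C i) then D i else C i with hw
  set S : Finset (TV n δ) :=
    Finset.univ.image w ∪ Finset.univ.image L with hS
  have e1 : ∀ i, s ≤ t (C i) → w i = D i := fun i h => if_pos h
  have e2 : ∀ i, ¬ s ≤ t (C i) → w i = C i := fun i h => if_neg h
  have hwinj : Function.Injective w := by
    intro a b hab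
    by_cases ha : s ≤ t (C a) <;> by_cases hb : s ≤ t (C b) <;>
      simp only [e1, e2, ha, hb, not_false_eq_true] at hab <;>
      simp_all
  have hLinj : Function.Injective L := by
    intro a b hab; simp only [hL] at hab; simp_all
  have hdisj : Disjoint (Finset.univ.image w) (Finset.univ.image L) := by
    rw [Finset.disjoint_left]
    rintro x hx hy
    obtain ⟨i, -, rfl⟩ := Finset.mem_image.mp hx
    obtain ⟨k, -, hk⟩ := Finset.mem_image.mp hy
    by_cases hi : s ≤ t (C i)
    · rw [e1 i hi] at hk; simp [hD, hL] at hk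
    · rw [e2 i hi] at hk; simp [hC, hL] at hk
  have hcard : S.card = n + δ := by
    rw [hS, Finset.card_union_of_disjoint hdisj,
      Finset.card_image_of_injective _ hwinj, Finset.card_image_of_injective _ hLinj]
    simp
  have hmem : n + δ ≤ (theTree n δ hδ).memAt t s := by
    rw [← hcard, InTree.memAt]
    apply Finset.card_le_card
    intro x hx
    rw [hS, Finset.mem_union] at hx
    rcases hx with hx | hx
    · obtain ⟨i, -, rfl⟩ := Finset.mem_image.mp hx
      by_cases hi : s ≤ t (C i)
      · have hwi : w i = D i := if_pos hi
        rw [hwi]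
        refine (Finset.mem_filter (α := (theTree n δ hδ).V)).mpr ⟨Finset.mem_univ _, hmax i (Finset.mem_univ _), Or.inr ?_⟩
        rw [hparD]; exact hi
      · have hwi : w i = C i := if_neg hi
        rw [hwi]
        refine (Finset.mem_filter (α := (theTree n δ hδ).V)).mpr ⟨Finset.mem_univ _, le_of_not_ge hi, Or.inr ?_⟩
        rw [hparC]; omega
    · obtain ⟨k, -, rfl⟩ := Finset.mem_image.mp hx
      refine (Finset.mem_filter (α := (theTree n δ hδ).V)).mpr ⟨Finset.mem_univ _, by have := hLD k; omega, Or.inr ?_⟩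
      rw [hparL]
  have hms : s < (theTree n δ hδ).makespan t := by
    have : t (D i0) + 1 ≤ (theTree n δ hδ).makespan t :=
      Finset.le_sup (f := fun i => t i + 1) (Finset.mem_univ (D i0))
    omega
  calc n + δ ≤ (theTree n δ hδ).memAt t s := hmem
    _ ≤ (theTree n δ hδ).peakMemory t :=
        Finset.le_sup (Finset.mem_range.mpr hms)
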